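/- Let H be a digraph on a finite vertex set V with n = |V| ≥ 2 vertices, let r ∈ V, let d1 < d2 be natural numbers with d2 − d1 ≥ 2·lg n, and let k ≥ 1 be an integer. Suppose |{v ∈ V : d_H(r, v) ≤ d1}| ≥ k and |{v ∈ V : d_H(r, v) ≥ d2}| ≥ k, where unreachable vertices have distance ∞ and hence count toward the second set. Then there exists an integer d with d1 ≤ d ≤ d2 such that the set S = {v ∈ V : d_H(r, v) = d} is a q-quality separator of H with q = (d2 − d1)/(2·lg n), and every SCC of H ∖ E(S) contains at most n − k vertices. -/

import Mathlib

variable {V : Type*}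

/-- Unweighted walk distance in the digraph with edge relation `E`:
the minimum number of edges of a walk from `u` to `v`, `∞` if none exists. -/
noncomputable def ddist (E : V → V → Prop) (u v : V) : ℕ∞ :=
  sInf { n : ℕ∞ | ∃ l : List V, l.Chain' E ∧ l.head? = some u ∧ l.getLast? = some v ∧
    n = ((l.length - 1 : ℕ) : ℕ∞) }

/-- Weighted walk distance: the minimum total weight of a walk from `u` to `v`. -/
noncomputable def wdist (E : V → V → Prop) (w : V → V → ℕ) (u v : V) : ℕ∞ :=
  sInf { n : ℕ∞ | ∃ l : List V, l.Chain' E ∧ l.head? = some u ∧ l.getLast? = some v ∧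
    n = ((((l.zip l.tail).map fun p => w p.1 p.2).sum : ℕ) : ℕ∞) }

/-- The digraph `H ∖ E(S)`: edges of `E` with neither endpoint in `S`. -/
def edgesAvoiding (E : V → V → Prop) (S : Set V) : V → V → Prop :=
  fun a b => E a b ∧ a ∉ S ∧ b ∉ S

/-- The strongly connected component of `v`: vertices mutually reachable with `v`. -/
def scc (E : V → V → Prop) (v : V) : Set V :=
  {u | Relation.ReflTransGen E u v ∧ Relation.ReflTransGen E v u}

/-- `S` is a `q`-quality separator: every SCC of `H ∖ E(S)` has at most `|V| - q·|S|` vertices. -/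
def QualSep [Fintype V] (E : V → V → Prop) (q : ℝ) (S : Set V) : Prop :=
  ∀ v : V, ((scc (edgesAvoiding E S) v).ncard : ℝ) ≤ (Fintype.card V : ℝ) - q * S.ncard

/-- Edge relation of the induced subdigraph on `C`. -/
def induced (E : V → V → Prop) (C : Set V) : V → V → Prop :=
  fun a b => E a b ∧ a ∈ C ∧ b ∈ C

/-- The (finite) collection of vertex sets of the SCCs of the digraph. -/
noncomputable def sccs [Fintype V] (E : V → V → Prop) : Finset (Set V) :=
  letI := Classical.decEq (Set V)
  Finset.image (fun v => scc E v) Finset.univ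

namespace ThinAux

lemma ddist_le_of_edge (E : V → V → Prop) (r u v : V) (h : E u v) :
    ddist E r v ≤ ddist E r u + 1 := by
  rcases Set.eq_empty_or_nonempty { n : ℕ∞ | ∃ l : List V, l.Chain' E ∧ l.head? = some r ∧
      l.getLast? = some u ∧ n = ((l.length - 1 : ℕ) : ℕ∞) } with he | hne
  · rw [ddist]
    conv_rhs => rw [ddist, he, sInf_empty]
    simp
  · have hm := csInf_mem hne
    obtain ⟨l, hc, hh, hl, hn⟩ := hm
    have hlne : l ≠ [] := by rintro rfl; simp at hh
    have hle : ddist E r v ≤ ((l.length : ℕ) : ℕ∞) := by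
      apply sInf_le
      refine ⟨l ++ [v], ?_, ?_, ?_, ?_⟩
      · show List.IsChain E (l ++ [v])
        rw [List.isChain_append]
        refine ⟨hc, List.isChain_singleton v, ?_⟩
        intro x hx y hy
        simp only [List.head?_cons, Option.mem_def, Option.some.injEq] at hy
        rw [hl] at hx
        simp only [Option.mem_def, Option.some.injEq] at hx
        subst hx; subst hy; exact h
      · rwa [List.head?_append_of_ne_nil _ hlne]
      · simp [List.getLast?_concat]
      · simp
    refine hle.trans ?_
    rw [ddist, hn]
    have h1 : (l.length - 1) + 1 = l.length := Nat.succ_pred_eq_of_pos (List.length_pos_iff.mpr hlne)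
    rw [← h1]; push_cast; rfl

lemma ddist_lt_of_walk (E : V → V → Prop) (r : V) (d : ℕ) {a b : V}
    (h : Relation.ReflTransGen (edgesAvoiding E {v | ddist E r v = (d:ℕ∞)}) a b)
    (ha : ddist E r a < (d:ℕ∞)) : ddist E r b < (d:ℕ∞) := by
  induction h with
  | refl => exact ha
  | tail _ hedge ih =>
    obtain ⟨hE, _, hb⟩ := hedge
    have h1 := ddist_le_of_edge E r _ _ hE
    have h2 : ddist E r _ + 1 ≤ (d:ℕ∞) := Order.add_one_le_of_lt ih
    exact lt_of_le_of_ne (h1.trans h2) hb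

lemma scc_mem_singleton (E : V → V → Prop) (S : Set V) (v : V) (hv : v ∈ S) :
    scc (edgesAvoiding E S) v = {v} := by
  ext u
  simp only [scc, Set.mem_setOf_eq, Set.mem_singleton_iff]
  constructor
  · rintro ⟨h1, -⟩
    rcases h1.cases_tail with h | ⟨c, -, hcv⟩
    · exact h.symm
    · exact absurd hv hcv.2.2
  · rintro rfl; exact ⟨.refl, .refl⟩

lemma scc_classify (E : V → V → Prop) (r : V) (d : ℕ) (v : V) :
    scc (edgesAvoiding E {u | ddist E r u = (d:ℕ∞)}) v ⊆ {u | ddist E r u < (d:ℕ∞)}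
    ∨ scc (edgesAvoiding E {u | ddist E r u = (d:ℕ∞)}) v = {v}
    ∨ scc (edgesAvoiding E {u | ddist E r u = (d:ℕ∞)}) v ⊆ {u | (d:ℕ∞) < ddist E r u} := by
  rcases lt_trichotomy (ddist E r v) (d:ℕ∞) with hv | hv | hv
  · left
    rintro u ⟨-, h2⟩
    exact ddist_lt_of_walk E r d h2 hv
  · exact Or.inr (Or.inl (scc_mem_singleton E _ v hv))
  · right; right
    rintro u ⟨hwalk, -⟩
    by_contra hu
    simp only [Set.mem_setOf_eq, not_lt] at hu
    have hu' : ddist E r u < (d:ℕ∞) := by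
      rcases hu.lt_or_eq with h | h
      · exact h
      · rcases hwalk.cases_head with rfl | ⟨c, huc, -⟩
        · exact absurd h (by simpa using hv.ne')
        · exact absurd h (by simpa using huc.2.1)
    exact absurd (ddist_lt_of_walk E r d hwalk hu') (lt_asymm hv)

lemma two_rpow_le (x : ℝ) (h0 : 0 ≤ x) (h1 : x ≤ 1) : (2:ℝ) ^ x ≤ 1 + x := by
  have := convexOn_exp.2 (Set.mem_univ 0) (Set.mem_univ (Real.log 2))
    (by linarith : (0:ℝ) ≤ 1 - x) h0 (by ring)
  simp only [smul_eq_mul, mul_zero, zero_add, Real.exp_zero, mul_one] at this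
  rw [Real.rpow_def_of_pos (by norm_num)]
  calc Real.exp (Real.log 2 * x) = Real.exp (x * Real.log 2) := by ring_nf
    _ ≤ (1 - x) + x * Real.exp (Real.log 2) := this
    _ = 1 + x := by rw [Real.exp_log (by norm_num)]; ring

lemma growth (q : ℝ) (hq : 1 ≤ q) (f : ℕ → ℝ) (t : ℕ)
    (h : ∀ j < t, f j * (1 + 1/q) ≤ f (j + 1)) (h0 : 1 ≤ f 0) :
    (2:ℝ) ^ ((t:ℝ)/q) ≤ f t := by
  have hqpos : (0:ℝ) < q := lt_of_lt_of_le one_pos hq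
  have key : (1 + 1/q) ^ t ≤ f t := by
    induction t with
    | zero => simpa using h0
    | succ n ih =>
      have hn : ∀ j < n, f j * (1 + 1/q) ≤ f (j + 1) :=
        fun j hj => h j (hj.trans (Nat.lt_succ_self n))
      calc (1 + 1/q) ^ (n+1) = (1 + 1/q)^n * (1 + 1/q) := by ring
        _ ≤ f n * (1 + 1/q) := by
            apply mul_le_mul_of_nonneg_right (ih hn)
            positivity
        _ ≤ f (n + 1) := h n (Nat.lt_succ_self n)
  refine le_trans ?_ key
  have h2 : (2:ℝ) ^ ((1:ℝ)/q) ≤ 1 + 1/q :=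
    two_rpow_le _ (by positivity) (by rw [div_le_one hqpos]; exact hq)
  calc (2:ℝ) ^ ((t:ℝ)/q) = ((2:ℝ) ^ ((1:ℝ)/q)) ^ t := by
        rw [← Real.rpow_natCast ((2:ℝ) ^ ((1:ℝ)/q)) t, ← Real.rpow_mul (by norm_num)]
        ring_nf
    _ ≤ (1 + 1/q) ^ t := by
        apply pow_le_pow_left₀ (by positivity) h2

lemma lt_cast_iff (x : ℕ∞) (d : ℕ) (hd : 1 ≤ d) : x < (d:ℕ∞) ↔ x ≤ ((d-1:ℕ):ℕ∞) := by
  obtain ⟨e, rfl⟩ : ∃ e, d = e + 1 := ⟨d-1, by omega⟩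
  have he : (e + 1 - 1 : ℕ) = e := rfl
  rw [he]
  have hc : ((e+1:ℕ):ℕ∞) = (e:ℕ∞) + 1 := by push_cast; rfl
  rw [hc]
  constructor
  · exact Order.le_of_lt_add_one
  · intro h
    refine lt_of_le_of_lt h ?_
    have := Nat.cast_lt (α := ℕ∞) |>.mpr (Nat.lt_succ_self e)
    push_cast at this; exact this

lemma le_cast_succ_iff (x : ℕ∞) (j : ℕ) :
    x ≤ ((j+1:ℕ):ℕ∞) ↔ x ≤ (j:ℕ∞) ∨ x = ((j+1:ℕ):ℕ∞) := by
  constructor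
  · intro h
    rcases h.lt_or_eq with h | h
    · left
      have := (lt_cast_iff x (j+1) (by omega)).mp h
      simpa using this
    · right; exact h
  · rintro (h | rfl)
    · exact h.trans (Nat.cast_le.mpr (by omega))
    · exact le_rfl

lemma ncard_add_le [Fintype V] (A B : Set V) (h : Disjoint A B) :
    A.ncard + B.ncard ≤ Fintype.card V := by
  rw [← Set.ncard_union_eq h A.toFinite B.toFinite]
  have := Set.ncard_le_ncard (Set.subset_univ (A ∪ B)) Set.finite_univ
  simpa [Set.ncard_univ, Nat.card_eq_fintype_card] using this

end ThinAux

set_option maxHeartbeats 2000000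

open ThinAux

/-- the ThinLayer lemma (existence content). -/
theorem stmt4 {V : Type*} [Fintype V] (E : V → V → Prop) (r : V)
    (hn : 2 ≤ Fintype.card V)
    (d1 d2 : ℕ) (hd : d1 < d2)
    (hgap : 2 * Real.logb 2 (Fintype.card V) ≤ (d2 : ℝ) - d1)
    (k : ℕ) (hk : 1 ≤ k)
    (h1 : k ≤ {v : V | ddist E r v ≤ (d1 : ℕ∞)}.ncard)
    (h2 : k ≤ {v : V | (d2 : ℕ∞) ≤ ddist E r v}.ncard) :
    ∃ d : ℕ, d1 ≤ d ∧ d ≤ d2 ∧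
      QualSep E ((d2 - d1 : ℝ) / (2 * Real.logb 2 (Fintype.card V)))
        {v : V | ddist E r v = (d : ℕ∞)} ∧
      ∀ v : V,
        (scc (edgesAvoiding E {v : V | ddist E r v = (d : ℕ∞)}) v).ncard
          ≤ Fintype.card V - k := by
  classical
  set n := Fintype.card V with hn_def
  have hn2 : (2:ℝ) ≤ (n:ℝ) := by exact_mod_cast hn
  have hNpos : (0:ℝ) < (n:ℝ) := by linarith
  set g := Real.logb 2 (n : ℝ) with hg_def
  have hg1 : (1:ℝ) ≤ g := by
    rw [hg_def]
    calc (1:ℝ) = Real.logb 2 2 := (Real.logb_self_eq_one (by norm_num)).symm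
      _ ≤ Real.logb 2 (n:ℝ) := Real.logb_le_logb_of_le (by norm_num) (by norm_num) hn2
  have hgpos : (0:ℝ) < g := by linarith
  set q : ℝ := ((d2:ℝ) - (d1:ℝ)) / (2 * g) with hq_def
  have hq1 : (1:ℝ) ≤ q := by
    rw [hq_def, le_div_iff₀ (by linarith)]
    linarith [hgap]
  have hq0 : (0:ℝ) < q := by linarith
  have hq2g : q * (2 * g) = (d2:ℝ) - (d1:ℝ) := div_mul_cancel₀ _ (by positivity)
  have h2rg : (2:ℝ) ^ g = (n:ℝ) := Real.rpow_logb (by norm_num) (by norm_num) hNpos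
  set b : ℕ → ℕ := fun j => {v : V | ddist E r v ≤ (j:ℕ∞)}.ncard with hb_def
  set s : ℕ → ℕ := fun j => {v : V | ddist E r v = (j:ℕ∞)}.ncard with hs_def
  -- basic counting facts
  have hbsucc : ∀ j : ℕ, b (j+1) = b j + s (j+1) := by
    intro j
    have hU : {v : V | ddist E r v ≤ ((j+1:ℕ):ℕ∞)} =
        {v : V | ddist E r v ≤ (j:ℕ∞)} ∪ {v : V | ddist E r v = ((j+1:ℕ):ℕ∞)} := by
      ext x
      simp only [Set.mem_setOf_eq, Set.mem_union]
      exact le_cast_succ_iff _ j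
    have hdisj : Disjoint {v : V | ddist E r v ≤ (j:ℕ∞)}
        {v : V | ddist E r v = ((j+1:ℕ):ℕ∞)} := by
      rw [Set.disjoint_left]
      intro x hx hx'
      simp only [Set.mem_setOf_eq] at hx hx'
      rw [hx'] at hx
      exact absurd (Nat.cast_le.mp hx) (by omega)
    simp only [hb_def, hs_def]
    rw [hU, Set.ncard_union_eq hdisj (Set.toFinite _) (Set.toFinite _)]
  have hbmono : ∀ i j : ℕ, i ≤ j → b i ≤ b j := by
    intro i j hij
    simp only [hb_def]
    apply Set.ncard_le_ncard _ (Set.toFinite _)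
    intro v hv
    simp only [Set.mem_setOf_eq] at hv ⊢
    exact le_trans hv (Nat.cast_le.mpr hij)
  have hbn : ∀ j, b j ≤ n := by
    intro j
    simp only [hb_def]
    have := ncard_add_le {v : V | ddist E r v ≤ (j:ℕ∞)} ∅ (by simp)
    simpa using this
  have hkb : k ≤ b d1 := by simp only [hb_def]; exact h1
  have hck : ∀ j, j < d2 → b j + k ≤ n := by
    intro j hj
    have hdisj : Disjoint {v : V | ddist E r v ≤ (j:ℕ∞)}
        {v : V | (d2:ℕ∞) ≤ ddist E r v} := by
      rw [Set.disjoint_left]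
      intro x hx hx2
      simp only [Set.mem_setOf_eq] at hx hx2
      have := Nat.cast_le (α := ℕ∞) |>.mp (hx2.trans hx)
      omega
    have hle := ncard_add_le _ _ hdisj
    simp only [hb_def]
    omega
  have hkk : k + k ≤ n := by
    have := hck d1 hd
    omega
  -- the key existence statement
  have key : ∃ d : ℕ, d1 < d ∧ d < d2 ∧
      (q * (s d : ℝ) ≤ (n:ℝ) - (b (d-1) : ℝ)) ∧
      (q * (s d : ℝ) ≤ (b d : ℝ)) ∧
      (q * (s d : ℝ) ≤ (n:ℝ) - 1) := by
    have hu2 : 2 ≤ d2 - d1 := by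
      have hx : (2:ℝ) ≤ (d2:ℝ) - d1 := le_trans (by linarith) hgap
      have h' : (2:ℝ) ≤ ((d2 - d1 : ℕ):ℝ) := by rw [Nat.cast_sub hd.le]; exact hx
      exact_mod_cast h'
    set m2 := d1 + (d2 - d1)/2 with hm2_def
    have hm2a : d1 < m2 := by omega
    have hm2b : m2 < d2 := by omega
    have hcast_u : ((d2 - d1 : ℕ):ℝ) = q * (2*g) := by rw [Nat.cast_sub hd.le, hq2g]
    have hsqrt : (2:ℝ)^((1:ℝ)/2) < 2 := by
      have := Real.rpow_lt_rpow_of_exponent_lt (x := 2) (by norm_num) (by norm_num : (1:ℝ)/2 < 1)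
      rwa [Real.rpow_one] at this
    have hsp : (0:ℝ) < (2:ℝ)^((1:ℝ)/2) := by positivity
    rcases le_or_gt (2 * b m2) n with hA | hB
    · -- case A : b m2 ≤ n/2 ; find sparse layer in (d1, m2]
      have hbm : (b m2 : ℝ) ≤ (n:ℝ)/2 := by
        have : ((2 * b m2 : ℕ) : ℝ) ≤ (n:ℝ) := by exact_mod_cast hA
        push_cast at this
        linarith
      have hstep : ∃ d, d1 < d ∧ d ≤ m2 ∧ q * (s d:ℝ) ≤ (b (d-1) : ℝ) := by
        by_contra hcon
        push_neg at hcon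
        set t := m2 - d1 with ht_def
        have hg2 : (2:ℝ) ^ ((t:ℝ)/q) ≤ ((b (d1 + t) : ℕ) : ℝ) := by
          apply growth q hq1 (fun j => (b (d1 + j) : ℝ)) t
          · intro j hj
            have hno := hcon (d1 + j + 1) (by omega) (by omega)
            have heq : d1 + j + 1 - 1 = d1 + j := by omega
            rw [heq] at hno
            have hcast : (b (d1+j+1) : ℝ) = (b (d1+j) : ℝ) + (s (d1+j+1) : ℝ) := by
              exact_mod_cast congrArg (Nat.cast (R := ℝ)) (hbsucc (d1+j))
            have hdivle : (b (d1+j) : ℝ) * (1/q) ≤ (s (d1+j+1) : ℝ) := by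
              rw [mul_one_div, div_le_iff₀ hq0]
              nlinarith [hno]
            have hring : ((b (d1+j):ℝ)) * (1 + 1/q) =
                (b (d1+j):ℝ) + (b (d1+j):ℝ) * (1/q) := by ring
            rw [hring]
            have haddeq : d1 + (j + 1) = d1 + j + 1 := by omega
            rw [haddeq, hcast]
            linarith
          · simp only [Nat.add_zero]
            have hk' : (1:ℝ) ≤ (k:ℝ) := by exact_mod_cast hk
            have : (k:ℝ) ≤ (b d1 : ℝ) := by exact_mod_cast hkb
            linarith
        rw [show d1 + t = m2 by omega] at hg2
        have htR : q * g - 1/2 ≤ (t:ℝ) := by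
          have h2t : d2 - d1 ≤ 2 * t + 1 := by omega
          have hc : ((d2 - d1:ℕ):ℝ) ≤ 2*(t:ℝ)+1 := by exact_mod_cast h2t
          rw [hcast_u] at hc
          linarith
        have hexp : g - 1/2 ≤ (t:ℝ)/q := by
          rw [le_div_iff₀ hq0]
          nlinarith
        have hmono := Real.rpow_le_rpow_of_exponent_le (by norm_num : (1:ℝ) ≤ 2) hexp
        have hval : (2:ℝ) ^ (g - 1/2) = (n:ℝ) / (2:ℝ)^((1:ℝ)/2) := by
          rw [Real.rpow_sub (by norm_num), h2rg]
        rw [hval] at hmono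
        have hgt : (n:ℝ)/2 < (n:ℝ)/(2:ℝ)^((1:ℝ)/2) :=
          div_lt_div_of_pos_left hNpos hsp hsqrt
        linarith
      obtain ⟨d, hda, hdb, hqs⟩ := hstep
      have hb1 : (b (d-1) : ℝ) ≤ (b m2 : ℝ) := by exact_mod_cast hbmono _ _ (by omega)
      have hbd : (b (d-1) : ℝ) ≤ (b d : ℝ) := by exact_mod_cast hbmono _ _ (by omega)
      exact ⟨d, hda, lt_of_le_of_lt hdb hm2b, by linarith, by linarith, by linarith⟩
    · -- case B : b m2 > n/2 ; find sparse layer in (m2, d2-1]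
      have hBgt : (n:ℝ) < 2 * (b m2 : ℝ) := by
        have : ((n:ℕ):ℝ) < ((2 * b m2 : ℕ):ℝ) := by exact_mod_cast hB
        push_cast at this
        linarith
      have hck2 : b (d2 - 1) + k ≤ n := hck (d2-1) (by omega)
      have hstep : ∃ d, m2 < d ∧ d ≤ d2 - 1 ∧ q * (s d:ℝ) ≤ (n:ℝ) - (b d : ℝ) := by
        by_contra hcon
        push_neg at hcon
        set t := d2 - 1 - m2 with ht_def
        have hg2 : (2:ℝ) ^ ((t:ℝ)/q) ≤ (n:ℝ) - (b (d2 - 1 - t) : ℝ) := by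
          apply growth q hq1 (fun j => (n:ℝ) - (b (d2 - 1 - j) : ℝ)) t
          · intro j hj
            have hdl : m2 < d2 - 1 - j := by omega
            have hno := hcon (d2 - 1 - j) hdl (by omega)
            have he1 : d2 - 1 - (j+1) = (d2 - 1 - j) - 1 := by omega
            have he2 : ((d2 - 1 - j) - 1) + 1 = d2 - 1 - j := by omega
            have hsucc := hbsucc ((d2 - 1 - j) - 1)
            rw [he2] at hsucc
            have hcast : (b (d2-1-j) : ℝ) = (b ((d2-1-j)-1) : ℝ) + (s (d2-1-j) : ℝ) := by
              exact_mod_cast congrArg (Nat.cast (R := ℝ)) hsucc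
            have hdivle : ((n:ℝ) - (b (d2-1-j):ℝ)) * (1/q) ≤ (s (d2-1-j) : ℝ) := by
              rw [mul_one_div, div_le_iff₀ hq0]
              nlinarith [hno]
            have hring : ((n:ℝ) - (b (d2-1-j):ℝ)) * (1 + 1/q) =
                ((n:ℝ) - (b (d2-1-j):ℝ)) + ((n:ℝ) - (b (d2-1-j):ℝ)) * (1/q) := by ring
            rw [hring, he1]
            linarith
          · simp only [Nat.sub_zero]
            have hk' : (1:ℝ) ≤ (k:ℝ) := by exact_mod_cast hk
            have hc : (b (d2-1) : ℝ) + (k:ℝ) ≤ (n:ℝ) := by exact_mod_cast hck2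
            linarith
        rw [show d2 - 1 - t = m2 by omega] at hg2
        have htR : q * g - 1 ≤ (t:ℝ) := by
          have h2t : d2 - d1 ≤ 2 * t + 2 := by omega
          have hc : ((d2 - d1:ℕ):ℝ) ≤ 2*(t:ℝ)+2 := by exact_mod_cast h2t
          rw [hcast_u] at hc
          linarith
        have hexp : g - 1 ≤ (t:ℝ)/q := by
          rw [le_div_iff₀ hq0]
          nlinarith
        have hmono := Real.rpow_le_rpow_of_exponent_le (by norm_num : (1:ℝ) ≤ 2) hexp
        have hval : (2:ℝ) ^ (g - 1) = (n:ℝ) / 2 := by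
          rw [Real.rpow_sub (by norm_num), h2rg, Real.rpow_one]
        rw [hval] at hmono
        linarith
      obtain ⟨d, hda, hdb, hqs⟩ := hstep
      have hbm2d : (b m2 : ℝ) ≤ (b d : ℝ) := by exact_mod_cast hbmono _ _ (by omega)
      have hbd : (b (d-1) : ℝ) ≤ (b d : ℝ) := by exact_mod_cast hbmono _ _ (by omega)
      exact ⟨d, by omega, by omega, by linarith, by linarith, by linarith⟩
  -- conclude from key
  obtain ⟨d, hda, hdb, F1, F2, F3⟩ := key
  have hd1' : 1 ≤ d := by omega
  have hGn : {u : V | (d:ℕ∞) < ddist E r u}.ncard + b d ≤ n := by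
    have hdisj : Disjoint {u : V | (d:ℕ∞) < ddist E r u} {v : V | ddist E r v ≤ (d:ℕ∞)} := by
      rw [Set.disjoint_left]
      intro x hx hx2
      simp only [Set.mem_setOf_eq] at hx hx2
      exact absurd hx2 (not_le.mpr hx)
    have := ncard_add_le _ _ hdisj
    simp only [hb_def]
    omega
  have hGd1 : {u : V | (d:ℕ∞) < ddist E r u}.ncard + k ≤ n := by
    have hdisj : Disjoint {u : V | (d:ℕ∞) < ddist E r u} {v : V | ddist E r v ≤ (d1:ℕ∞)} := by
      rw [Set.disjoint_left]
      intro x hx hx2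
      simp only [Set.mem_setOf_eq] at hx hx2
      have h' : (d:ℕ∞) < (d1:ℕ∞) := lt_of_lt_of_le hx hx2
      have := Nat.cast_lt (α := ℕ∞) |>.mp h'
      omega
    have := ncard_add_le _ _ hdisj
    omega
  have hscc_lt : ∀ v : V,
      scc (edgesAvoiding E {u | ddist E r u = (d:ℕ∞)}) v ⊆ {u | ddist E r u < (d:ℕ∞)} →
      (scc (edgesAvoiding E {u | ddist E r u = (d:ℕ∞)}) v).ncard ≤ b (d-1) := by
    intro v hsub
    simp only [hb_def]
    apply Set.ncard_le_ncard _ (Set.toFinite _)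
    intro u hu
    exact (lt_cast_iff _ d hd1').mp (hsub hu)
  have hscc_gt : ∀ v : V,
      scc (edgesAvoiding E {u | ddist E r u = (d:ℕ∞)}) v ⊆ {u | (d:ℕ∞) < ddist E r u} →
      (scc (edgesAvoiding E {u | ddist E r u = (d:ℕ∞)}) v).ncard ≤
        {u : V | (d:ℕ∞) < ddist E r u}.ncard := by
    intro v hsub
    exact Set.ncard_le_ncard hsub (Set.toFinite _)
  have hsd : ({v : V | ddist E r v = (d:ℕ∞)}).ncard = s d := by simp only [hs_def]
  have hcb : b (d-1) + k ≤ n := hck (d-1) (by omega)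
  refine ⟨d, hda.le, hdb.le, ?_, ?_⟩
  · intro v
    rw [hsd]
    rcases scc_classify E r d v with hsub | heq | hsub
    · have hle := hscc_lt v hsub
      have hleR : ((scc (edgesAvoiding E {u | ddist E r u = (d:ℕ∞)}) v).ncard : ℝ)
          ≤ (b (d-1) : ℝ) := by exact_mod_cast hle
      linarith
    · rw [heq, Set.ncard_singleton]
      push_cast
      linarith
    · have hle := hscc_gt v hsub
      have hleR : ((scc (edgesAvoiding E {u | ddist E r u = (d:ℕ∞)}) v).ncard : ℝ)
          ≤ ({u : V | (d:ℕ∞) < ddist E r u}.ncard : ℝ) := by exact_mod_cast hle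
      have hGnR : ({u : V | (d:ℕ∞) < ddist E r u}.ncard : ℝ) + (b d : ℝ) ≤ (n:ℝ) := by
        exact_mod_cast hGn
      linarith
  · intro v
    rcases scc_classify E r d v with hsub | heq | hsub
    · have hle := hscc_lt v hsub
      omega
    · rw [heq, Set.ncard_singleton]
      omega
    · have hle := hscc_gt v hsub
      omega
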